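/- Fix real constants b > 0 and c₁ > 0. For τ > 0 set c := c₁τ and A := 2c₁τ², define M_τ(u) = A(b+cu)^{−2} on [0,1], Δ_τ(u) = ∫_0^u ( −∫_v^1 M_τ(s) ds ) dv, Γ_τ(u) = ∫_0^u ( −2∫_v^1 M_τ(s)Δ_τ(s) ds ) dv, and B₂(τ) := ∫_0^1 ( 3Δ_τ(u)² − Γ_τ(u) ) du. Then lim_{τ → 0⁺} B₂(τ)/τ⁴ = 8c₁²/(15b⁴). -/

import Mathlib

open MeasureTheory Real Filter Topology

/-- The weight `M_τ(u) = A (b + c u)⁻²` with `c = c₁ τ`, `A = 2 c₁ τ²`. -/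
noncomputable def Mwt (b c₁ τ u : ℝ) : ℝ := (2 * c₁ * τ ^ 2) * ((b + c₁ * τ * u) ^ 2)⁻¹

/-- `Δ_τ(u) = ∫_0^u (−∫_v^1 M_τ)`. -/
noncomputable def DeltaFn (b c₁ τ u : ℝ) : ℝ :=
  ∫ v in (0:ℝ)..u, -(∫ s in v..(1:ℝ), Mwt b c₁ τ s)

/-- `Γ_τ(u) = ∫_0^u (−2∫_v^1 M_τ Δ_τ)`. -/
noncomputable def GammaFn (b c₁ τ u : ℝ) : ℝ :=
  ∫ v in (0:ℝ)..u, (-2 * ∫ s in v..(1:ℝ), Mwt b c₁ τ s * DeltaFn b c₁ τ s)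

open intervalIntegral

/-! ### Rescaled (surrogate) functions, continuous in `(τ, u)` jointly -/

/-- Surrogate for `M_τ/τ²`, globally continuous thanks to the `max` clamp. -/
noncomputable def mS (b c₁ τ s : ℝ) : ℝ := 2*c₁ * ((max (b + c₁*τ*s) (b/2))^2)⁻¹
noncomputable def JS (b c₁ τ v : ℝ) : ℝ := ∫ s in v..(1:ℝ), mS b c₁ τ s
noncomputable def dS (b c₁ τ u : ℝ) : ℝ := ∫ v in (0:ℝ)..u, -(JS b c₁ τ v)
noncomputable def KS (b c₁ τ v : ℝ) : ℝ := ∫ s in v..(1:ℝ), mS b c₁ τ s * dS b c₁ τ s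
noncomputable def gS (b c₁ τ u : ℝ) : ℝ := ∫ v in (0:ℝ)..u, -2 * KS b c₁ τ v
noncomputable def FS (b c₁ τ : ℝ) : ℝ := ∫ u in (0:ℝ)..1, (3*(dS b c₁ τ u)^2 - gS b c₁ τ u)

/-- FTC for quartic polynomials. -/
lemma poly_int (a0 a1 a2 a3 a4 w u : ℝ) :
    ∫ x in w..u, (a0 + a1*x + a2*x^2 + a3*x^3 + a4*x^4) =
      (a0*u + a1*u^2/2 + a2*u^3/3 + a3*u^4/4 + a4*u^5/5)
      - (a0*w + a1*w^2/2 + a2*w^3/3 + a3*w^4/4 + a4*w^5/5) := by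
  have h : ∀ x : ℝ, HasDerivAt (fun t : ℝ => a0*t + a1*t^2/2 + a2*t^3/3 + a3*t^4/4 + a4*t^5/5)
      (a0 + a1*x + a2*x^2 + a3*x^3 + a4*x^4) x := by
    intro x
    have := (((((hasDerivAt_id x).const_mul a0).add
      (((hasDerivAt_pow 2 x).const_mul a1).div_const 2)).add
      (((hasDerivAt_pow 3 x).const_mul a2).div_const 3)).add
      (((hasDerivAt_pow 4 x).const_mul a3).div_const 4)).add
      (((hasDerivAt_pow 5 x).const_mul a4).div_const 5)
    exact this.congr_deriv (by norm_num; ring)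
  exact integral_eq_sub_of_hasDerivAt (fun x _ => h x)
    (Continuous.intervalIntegrable (by continuity) w u)

variable {b c₁ : ℝ} {X : Type*} [TopologicalSpace X] {f g : X → ℝ}

/-! ### Joint continuity -/

lemma mS_cont (hb : 0 < b) (hf : Continuous f) (hg : Continuous g) :
    Continuous fun x => mS b c₁ (f x) (g x) := by
  unfold mS
  apply continuous_const.mul
  apply Continuous.inv₀
  · continuity
  · intro x
    have : (0:ℝ) < max (b + c₁*f x*g x) (b/2) := lt_of_lt_of_le (by linarith) (le_max_right _ _)
    positivity

lemma JS_cont (hb : 0 < b) (hf : Continuous f) (hg : Continuous g) :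
    Continuous fun x => JS b c₁ (f x) (g x) := by
  have h : Continuous fun p : ℝ × ℝ => ∫ s in (1:ℝ)..p.2, mS b c₁ p.1 s :=
    continuous_parametric_intervalIntegral_of_continuous
      (f := fun (p : ℝ × ℝ) s => mS b c₁ p.1 s)
      (mS_cont hb (continuous_fst.comp continuous_fst) continuous_snd)
      continuous_snd
  have he : (fun x => JS b c₁ (f x) (g x))
      = fun x => -((fun p : ℝ × ℝ => ∫ s in (1:ℝ)..p.2, mS b c₁ p.1 s) ((f x), (g x))) := by
    funext x; rw [JS, integral_symm]
  rw [he]; exact (h.comp (hf.prodMk hg)).neg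

lemma dS_cont (hb : 0 < b) (hf : Continuous f) (hg : Continuous g) :
    Continuous fun x => dS b c₁ (f x) (g x) := by
  have h : Continuous fun p : ℝ × ℝ => ∫ v in (0:ℝ)..p.2, -(JS b c₁ p.1 v) :=
    continuous_parametric_intervalIntegral_of_continuous
      (f := fun (p : ℝ × ℝ) v => -(JS b c₁ p.1 v))
      ((JS_cont hb (continuous_fst.comp continuous_fst) continuous_snd).neg)
      continuous_snd
  have he : (fun x => dS b c₁ (f x) (g x))
      = fun x => (fun p : ℝ × ℝ => ∫ v in (0:ℝ)..p.2, -(JS b c₁ p.1 v)) ((f x), (g x)) := by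
    funext x; rfl
  rw [he]; exact h.comp (hf.prodMk hg)

lemma KS_cont (hb : 0 < b) (hf : Continuous f) (hg : Continuous g) :
    Continuous fun x => KS b c₁ (f x) (g x) := by
  have h : Continuous fun p : ℝ × ℝ => ∫ s in (1:ℝ)..p.2, mS b c₁ p.1 s * dS b c₁ p.1 s :=
    continuous_parametric_intervalIntegral_of_continuous
      (f := fun (p : ℝ × ℝ) s => mS b c₁ p.1 s * dS b c₁ p.1 s)
      ((mS_cont hb (continuous_fst.comp continuous_fst) continuous_snd).mul
        (dS_cont hb (continuous_fst.comp continuous_fst) continuous_snd))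
      continuous_snd
  have he : (fun x => KS b c₁ (f x) (g x))
      = fun x => -((fun p : ℝ × ℝ => ∫ s in (1:ℝ)..p.2, mS b c₁ p.1 s * dS b c₁ p.1 s)
          ((f x), (g x))) := by
    funext x; rw [KS, integral_symm]
  rw [he]; exact (h.comp (hf.prodMk hg)).neg

lemma gS_cont (hb : 0 < b) (hf : Continuous f) (hg : Continuous g) :
    Continuous fun x => gS b c₁ (f x) (g x) := by
  have h : Continuous fun p : ℝ × ℝ => ∫ v in (0:ℝ)..p.2, -2 * KS b c₁ p.1 v :=
    continuous_parametric_intervalIntegral_of_continuous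
      (f := fun (p : ℝ × ℝ) v => -2 * KS b c₁ p.1 v)
      (continuous_const.mul (KS_cont hb (continuous_fst.comp continuous_fst) continuous_snd))
      continuous_snd
  have he : (fun x => gS b c₁ (f x) (g x))
      = fun x => (fun p : ℝ × ℝ => ∫ v in (0:ℝ)..p.2, -2 * KS b c₁ p.1 v) ((f x), (g x)) := by
    funext x; rfl
  rw [he]; exact h.comp (hf.prodMk hg)

lemma FS_cont (hb : 0 < b) : Continuous (fun τ : ℝ => FS b c₁ τ) :=
  continuous_parametric_intervalIntegral_of_continuous
    (f := fun (τ : ℝ) u => 3*(dS b c₁ τ u)^2 - gS b c₁ τ u)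
    (by
      show Continuous fun p : ℝ × ℝ => 3*(dS b c₁ p.1 p.2)^2 - gS b c₁ p.1 p.2
      exact ((continuous_const.mul ((dS_cont hb continuous_fst continuous_snd).pow 2)).sub
        (gS_cont hb continuous_fst continuous_snd)))
    continuous_const

/-! ### Values at `τ = 0` -/

lemma mS_zero (hb : 0 < b) (s : ℝ) : mS b c₁ 0 s = 2*c₁/b^2 := by
  unfold mS
  rw [mul_zero, zero_mul, add_zero, max_eq_left (half_le_self hb.le)]
  ring

lemma JS_zero (hb : 0 < b) (v : ℝ) : JS b c₁ 0 v = 2*c₁/b^2 * (1 - v) := by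
  unfold JS
  simp only [mS_zero hb, intervalIntegral.integral_const, smul_eq_mul]
  ring

lemma dS_zero (hb : 0 < b) (u : ℝ) : dS b c₁ 0 u = c₁/b^2 * (u^2 - 2*u) := by
  have h1 : (fun v : ℝ => -(JS b c₁ 0 v))
      = fun v => (-(2*c₁/b^2)) + (2*c₁/b^2)*v + 0*v^2 + 0*v^3 + 0*v^4 :=
    funext fun v => by rw [JS_zero hb]; ring
  rw [dS, h1, poly_int]
  ring

lemma KS_zero (hb : 0 < b) (v : ℝ) :
    KS b c₁ 0 v = 2*c₁^2/b^4 * (v^2 - v^3/3 - 2/3) := by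
  have hb' : b ≠ 0 := hb.ne'
  have h1 : (fun s : ℝ => mS b c₁ 0 s * dS b c₁ 0 s)
      = fun s => 0 + (-(4*c₁^2/b^4))*s + (2*c₁^2/b^4)*s^2 + 0*s^3 + 0*s^4 :=
    funext fun s => by rw [mS_zero hb, dS_zero hb]; field_simp; ring
  rw [KS, h1, poly_int]
  ring

lemma gS_zero (hb : 0 < b) (u : ℝ) :
    gS b c₁ 0 u = 4*c₁^2/b^4 * (2*u/3 + u^4/12 - u^3/3) := by
  have h1 : (fun v : ℝ => -2 * KS b c₁ 0 v)
      = fun v => (8*c₁^2/(3*b^4)) + 0*v + (-(4*c₁^2/b^4))*v^2 + (4*c₁^2/(3*b^4))*v^3 + 0*v^4 :=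
    funext fun v => by rw [KS_zero hb]; field_simp; ring
  rw [gS, h1, poly_int]
  field_simp
  ring

lemma FS_zero (hb : 0 < b) : FS b c₁ 0 = 8 * c₁^2 / (15 * b^4) := by
  have h1 : (fun u : ℝ => 3*(dS b c₁ 0 u)^2 - gS b c₁ 0 u)
      = fun u => 0 + (-(8*c₁^2/(3*b^4)))*u + (12*c₁^2/b^4)*u^2
          + (-(32*c₁^2/(3*b^4)))*u^3 + (8*c₁^2/(3*b^4))*u^4 :=
    funext fun u => by rw [dS_zero hb, gS_zero hb]; field_simp; ring
  rw [FS, h1, poly_int]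
  field_simp
  ring

/-! ### Rescaling identities for `τ > 0` -/

lemma uIcc_sub (v : ℝ) (hv : v ∈ Set.Icc (0:ℝ) 1) : Set.uIcc v (1:ℝ) ⊆ Set.Icc 0 1 := by
  rw [Set.uIcc_of_le hv.2]
  exact Set.Icc_subset_Icc hv.1 le_rfl

lemma mem01 {u v : ℝ} (hu : u ∈ Set.Icc (0:ℝ) 1) (hv : v ∈ Set.uIcc 0 u) :
    v ∈ Set.Icc (0:ℝ) 1 := by
  rw [Set.uIcc_of_le hu.1] at hv
  exact ⟨hv.1, hv.2.trans hu.2⟩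

lemma Mwt_eq (hb : 0 < b) (hc₁ : 0 < c₁) {τ : ℝ} (hτ : 0 < τ) {s : ℝ}
    (hs : s ∈ Set.Icc (0:ℝ) 1) : Mwt b c₁ τ s = τ^2 * mS b c₁ τ s := by
  have h : b + c₁ * τ * s ≥ b := by
    have := mul_nonneg (mul_nonneg hc₁.le hτ.le) hs.1
    linarith
  rw [Mwt, mS, max_eq_left (by linarith)]
  ring

lemma inner_eq (hb : 0 < b) (hc₁ : 0 < c₁) {τ : ℝ} (hτ : 0 < τ) {v : ℝ}
    (hv : v ∈ Set.Icc (0:ℝ) 1) :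
    (∫ s in v..(1:ℝ), Mwt b c₁ τ s) = τ^2 * JS b c₁ τ v := by
  rw [JS, ← intervalIntegral.integral_const_mul]
  exact intervalIntegral.integral_congr fun s hs => Mwt_eq hb hc₁ hτ (uIcc_sub v hv hs)

lemma Delta_eq (hb : 0 < b) (hc₁ : 0 < c₁) {τ : ℝ} (hτ : 0 < τ) {u : ℝ}
    (hu : u ∈ Set.Icc (0:ℝ) 1) :
    DeltaFn b c₁ τ u = τ^2 * dS b c₁ τ u := by
  rw [DeltaFn, dS, ← intervalIntegral.integral_const_mul]
  apply intervalIntegral.integral_congr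
  intro v hv
  have hv' : v ∈ Set.Icc (0:ℝ) 1 := mem01 hu hv
  dsimp only
  rw [inner_eq hb hc₁ hτ hv']
  ring

lemma Gamma_eq (hb : 0 < b) (hc₁ : 0 < c₁) {τ : ℝ} (hτ : 0 < τ) {u : ℝ}
    (hu : u ∈ Set.Icc (0:ℝ) 1) :
    GammaFn b c₁ τ u = τ^4 * gS b c₁ τ u := by
  rw [GammaFn, gS, ← intervalIntegral.integral_const_mul]
  apply intervalIntegral.integral_congr
  intro v hv
  have hv' : v ∈ Set.Icc (0:ℝ) 1 := mem01 hu hv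
  have hKv : (∫ s in v..(1:ℝ), Mwt b c₁ τ s * DeltaFn b c₁ τ s) = τ^4 * KS b c₁ τ v := by
    rw [KS, ← intervalIntegral.integral_const_mul]
    apply intervalIntegral.integral_congr
    intro s hs
    have hs' : s ∈ Set.Icc (0:ℝ) 1 := uIcc_sub v hv' hs
    dsimp only
    rw [Mwt_eq hb hc₁ hτ hs', Delta_eq hb hc₁ hτ hs']
    ring
  dsimp only
  rw [hKv]; ring

/-- Remark after Theorem 5.2: `lim_{τ→0⁺} B₂(τ)/τ⁴ = 8c₁²/(15b⁴)`
where `B₂(τ) = ∫_0^1 (3Δ_τ² − Γ_τ)`. -/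
theorem tendsto_B2_div_tau_pow_four (b c₁ : ℝ) (hb : 0 < b) (hc₁ : 0 < c₁) :
    Tendsto (fun τ : ℝ =>
        (∫ u in (0:ℝ)..1, (3 * (DeltaFn b c₁ τ u) ^ 2 - GammaFn b c₁ τ u)) / τ ^ 4)
      (𝓝[>] 0) (𝓝 (8 * c₁ ^ 2 / (15 * b ^ 4))) := by
  have key : ∀ τ ∈ Set.Ioi (0:ℝ),
      (∫ u in (0:ℝ)..1, (3 * (DeltaFn b c₁ τ u) ^ 2 - GammaFn b c₁ τ u)) / τ ^ 4
        = FS b c₁ τ := by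
    intro τ hτ
    have hτ' : (0:ℝ) < τ := hτ
    have hB : (∫ u in (0:ℝ)..1, (3 * (DeltaFn b c₁ τ u) ^ 2 - GammaFn b c₁ τ u))
        = τ^4 * FS b c₁ τ := by
      rw [FS, ← intervalIntegral.integral_const_mul]
      apply intervalIntegral.integral_congr
      intro u hu
      have hu' : u ∈ Set.Icc (0:ℝ) 1 := by
        rwa [Set.uIcc_of_le zero_le_one] at hu
      dsimp only
      rw [Delta_eq hb hc₁ hτ' hu', Gamma_eq hb hc₁ hτ' hu']
      ring
    rw [hB, mul_div_cancel_left₀ _ (pow_ne_zero 4 hτ'.ne')]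
  have hT : Tendsto (fun τ : ℝ => FS b c₁ τ) (𝓝[>] 0) (𝓝 (8 * c₁ ^ 2 / (15 * b ^ 4))) := by
    have := ((FS_cont (c₁ := c₁) hb).tendsto 0).mono_left (nhdsWithin_le_nhds (s := Set.Ioi (0:ℝ)))
    rwa [FS_zero hb] at this
  exact hT.congr' (eventually_nhdsWithin_of_forall fun τ hτ => (key τ hτ).symm)
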